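/- arXiv:2506.18278 — 4 statements merged into one kernel-verified Lean document; each statement's English description precedes it below -/
import Mathlib

section
/- For integers t ≥ 1, K > 1, and 0 ≤ m ≤ t-1, the partial sum identity holds: ∑_{k=t-m}^{t} (kK - t) · C(t,k) · (K-1)^{t-k} = t · (K-1)^{m+1} · C(t-1, m). -/
/-- Partial sum identity: for `t ≥ 1`, real `K > 1`, and `m ≤ t-1`,
`∑_{k=t-m}^{t} (kK - t) C(t,k) (K-1)^{t-k} = t (K-1)^{m+1} C(t-1,m)`. -/
theorem stmt_0 (t m : ℕ) (K : ℝ) (ht : 1 ≤ t) (hK : 1 < K) (hm : m ≤ t - 1) :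
    ∑ k ∈ Finset.Icc (t - m) t,
      ((k : ℝ) * K - (t : ℝ)) * (t.choose k : ℝ) * (K - 1) ^ (t - k)
    = (t : ℝ) * (K - 1) ^ (m + 1) * ((t - 1).choose m : ℝ) := by
  induction m with
  | zero =>
    rw [Nat.sub_zero, Finset.Icc_self, Finset.sum_singleton]
    simp
    ring
  | succ n ih =>
    have h2 : n + 2 ≤ t := by omega
    have ih' := ih (by omega)
    have hk : t - (n+1) + 1 = t - n := by omega
    have hsplit : Finset.Icc (t - (n+1)) t = insert (t - (n+1)) (Finset.Icc (t - n) t) := by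
      ext x; simp only [Finset.mem_Icc, Finset.mem_insert]; omega
    rw [hsplit, Finset.sum_insert (by simp [Finset.mem_Icc]; omega), ih']
    have hexp : t - (t - (n+1)) = n + 1 := by omega
    rw [hexp]
    have hsym : t.choose (t - (n+1)) = t.choose (n+1) := Nat.choose_symm (by omega)
    rw [hsym]
    have hc1 : ((t : ℝ)) * ((t-1).choose n) = (n+1) * (t.choose (n+1)) := by
      have h := Nat.add_one_mul_choose_eq (t-1) n
      rw [Nat.sub_add_cancel ht] at h
      have := congrArg (Nat.cast : ℕ → ℝ) h
      push_cast at this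
      linear_combination this
    have hc2 : ((t-1).choose (n+1) : ℝ) * t = (t.choose (n+1)) * ((t:ℝ) - (n+1)) := by
      have := Nat.choose_mul_succ_eq (t-1) (n+1)
      rw [Nat.sub_add_cancel ht] at this
      have := congrArg (Nat.cast : ℕ → ℝ) this
      push_cast [Nat.cast_sub (by omega : n+1 ≤ t)] at this
      linarith [this]
    have hcast : ((t - (n+1) : ℕ) : ℝ) = (t : ℝ) - (n+1) := by
      push_cast [Nat.cast_sub (by omega : n+1 ≤ t)]; ring
    rw [hcast]
    linear_combination (K-1)^(n+1) * hc1 - (K-1)^(n+2) * hc2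
end

section
/- Let {Z(t)} be i.i.d. random variables taking value K-1 with probability 1/K and -1 with probability (K-1)/K, for an integer K > 1. Let S(t) = ∑_{s=1}^t Z(s). Then E[max{S(t), 0}] = (t(K-1)^{m₀+1}/K^t) · C(t-1, m₀), where k₀ = ⌊t/K⌋ + 1 and m₀ = t - k₀. -/
open MeasureTheory
open Finset

noncomputable def gfun (K t k : ℕ) : ℝ :=
  (k:ℝ) * (t.choose k : ℝ) * (1/(K:ℝ))^k * (((K:ℝ)-1)/(K:ℝ))^(t+1-k)

lemma gstep (K t k : ℕ) (hK : 1 < K) (hk : k ≤ t) :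
    ((k:ℝ)*(K:ℝ) - (t:ℝ)) * ((t.choose k : ℝ) * (1/(K:ℝ))^k * (((K:ℝ)-1)/(K:ℝ))^(t-k))
      = (K:ℝ) * (gfun K t k - gfun K t (k+1)) := by
  have hK0 : (0:ℝ) < (K:ℝ) := by exact_mod_cast Nat.lt_of_lt_of_le Nat.zero_lt_one hK.le
  have hKne : (K:ℝ) ≠ 0 := ne_of_gt hK0
  have h1 : t + 1 - k = (t - k) + 1 := by omega
  have h2 : t + 1 - (k+1) = t - k := by omega
  have hc : ((t.choose (k+1) : ℝ)) * ((k:ℝ)+1) = (t.choose k : ℝ) * ((t:ℝ) - (k:ℝ)) := by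
    have h := Nat.choose_succ_right_eq t k
    have h' : ((t.choose (k+1) * (k+1) : ℕ) : ℝ) = ((t.choose k * (t - k) : ℕ) : ℝ) := by
      exact_mod_cast congrArg (Nat.cast (R := ℝ)) h
    push_cast [Nat.cast_sub hk] at h'
    linarith [h']
  have hKP : (K:ℝ) * (1/(K:ℝ)) = 1 := by field_simp
  have hKQ : (K:ℝ) * (((K:ℝ)-1)/(K:ℝ)) = (K:ℝ)-1 := by field_simp
  unfold gfun
  rw [h1, h2, pow_succ, pow_succ]
  set P : ℝ := 1/(K:ℝ)
  set Q : ℝ := ((K:ℝ)-1)/(K:ℝ)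
  push_cast
  linear_combination ((K:ℝ)*P*(P^k*Q^(t-k)))*hc + (-(k:ℝ)*(t.choose k : ℝ)*(P^k*Q^(t-k)))*hKQ
    + (((t:ℝ)-(k:ℝ))*(t.choose k : ℝ)*(P^k*Q^(t-k)))*hKP

lemma tele (K t : ℕ) (hK : 1 < K) (a b : ℕ) (hab : a ≤ b) (hbt : b ≤ t+1) :
    ∑ k ∈ Finset.Ico a b,
        (((k:ℝ)*(K:ℝ) - (t:ℝ)) * ((t.choose k : ℝ) * (1/(K:ℝ))^k * (((K:ℝ)-1)/(K:ℝ))^(t-k)))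
      = (K:ℝ) * (gfun K t a - gfun K t b) := by
  induction b with
  | zero =>
    have : a = 0 := Nat.le_zero.mp hab
    subst this; simp
  | succ n ih =>
    rcases Nat.lt_or_ge a (n+1) with h | h
    · have han : a ≤ n := Nat.lt_succ_iff.mp h
      rw [Finset.sum_Ico_succ_top han, ih han (by omega),
        gstep K t n hK (by omega)]
      ring
    · have : a = n+1 := le_antisymm hab h
      subst this; simp


/-- For `S(t)` a sum of i.i.d. binary variables taking value `K-1` w.p. `1/K` and `-1`
w.p. `(K-1)/K` (so `S` takes value `kK - t` with probability `C(t,k)(1/K)^k((K-1)/K)^{t-k}`),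
`E[max{S(t),0}] = (t (K-1)^{m₀+1} / K^t) C(t-1, m₀)` with `k₀ = ⌊t/K⌋ + 1`, `m₀ = t - k₀`. -/
theorem stmt_1 {Ω : Type*} [MeasurableSpace Ω] (μ : Measure Ω) [IsProbabilityMeasure μ]
    (K t : ℕ) (hK : 1 < K) (ht : 1 ≤ t)
    (S : Ω → ℝ) (hS : Measurable S)
    (hval : ∀ ω, ∃ k ≤ t, S ω = (k : ℝ) * (K : ℝ) - (t : ℝ))
    (hprob : ∀ k ≤ t, μ {ω | S ω = (k : ℝ) * (K : ℝ) - (t : ℝ)}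
      = ENNReal.ofReal ((t.choose k : ℝ) * (1 / (K : ℝ)) ^ k * (((K : ℝ) - 1) / K) ^ (t - k)))
    (k₀ m₀ : ℕ) (hk₀ : k₀ = t / K + 1) (hm₀ : m₀ = t - k₀) :
    ∫ ω, max (S ω) 0 ∂μ
      = (t : ℝ) * ((K : ℝ) - 1) ^ (m₀ + 1) / (K : ℝ) ^ t * ((t - 1).choose m₀ : ℝ) := by
  have hK0 : (0:ℝ) < (K:ℝ) := by exact_mod_cast Nat.lt_of_lt_of_le Nat.zero_lt_one hK.le
  have hKne : (K:ℝ) ≠ 0 := ne_of_gt hK0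
  have hK1 : (0:ℝ) ≤ (K:ℝ) - 1 := by
    have : (1:ℝ) ≤ (K:ℝ) := by exact_mod_cast hK.le
    linarith
  have hk₀t : k₀ ≤ t := by
    have := Nat.div_lt_self (by omega : 0 < t) hK
    omega
  -- the sets
  set A : ℕ → Set Ω := fun k => {ω | S ω = (k : ℝ) * (K : ℝ) - (t : ℝ)} with hA
  have hmeas : ∀ k, MeasurableSet (A k) := fun k =>
    hS (measurableSet_singleton ((k : ℝ) * (K : ℝ) - (t : ℝ)))
  -- pointwise decomposition
  have hpoint : ∀ ω, max (S ω) 0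
      = ∑ k ∈ range (t+1), (A k).indicator (fun _ => max ((k:ℝ)*(K:ℝ)-(t:ℝ)) 0) ω := by
    intro ω
    obtain ⟨k, hk, hSω⟩ := hval ω
    rw [Finset.sum_eq_single_of_mem k (mem_range.mpr (by omega))]
    · rw [Set.indicator_of_mem (by exact hSω), hSω]
    · intro j _ hjk
      apply Set.indicator_of_notMem
      simp only [hA, Set.mem_setOf_eq, hSω]
      intro h
      have h2 : (k:ℝ) * K = (j:ℝ) * K := by linarith
      have h3 : (k:ℝ) = j := mul_right_cancel₀ hKne h2
      exact hjk (by exact_mod_cast h3.symm)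
  simp_rw [hpoint]
  rw [integral_finset_sum _ (fun k _ => (integrable_const _).indicator (hmeas k))]
  have hterm : ∀ k ∈ range (t+1),
      ∫ ω, (A k).indicator (fun _ => max ((k:ℝ)*(K:ℝ)-(t:ℝ)) 0) ω ∂μ
        = ((t.choose k : ℝ) * (1/(K:ℝ))^k * (((K:ℝ)-1)/(K:ℝ))^(t-k))
            * max ((k:ℝ)*(K:ℝ)-(t:ℝ)) 0 := by
    intro k hk
    rw [integral_indicator_const _ (hmeas k), measureReal_def, hprob k (by simpa using Nat.lt_succ_iff.mp (mem_range.mp hk)),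
      ENNReal.toReal_ofReal (by positivity)]
    simp [smul_eq_mul]
  rw [Finset.sum_congr rfl hterm]
  -- split the sum
  have hsplit : range (t+1) = Finset.Ico 0 k₀ ∪ Finset.Ico k₀ (t+1) := by
    rw [Finset.range_eq_Ico, ← Finset.Ico_union_Ico_eq_Ico (Nat.zero_le k₀) (by omega)]
  rw [Finset.range_eq_Ico, ← Finset.sum_Ico_consecutive _ (Nat.zero_le k₀) (by omega : k₀ ≤ t+1)]
  have hzero : ∑ k ∈ Finset.Ico 0 k₀,
      ((t.choose k : ℝ) * (1/(K:ℝ))^k * (((K:ℝ)-1)/(K:ℝ))^(t-k)) * max ((k:ℝ)*(K:ℝ)-(t:ℝ)) 0 = 0 := by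
    apply Finset.sum_eq_zero
    intro k hk
    have hkle : k * K ≤ t := by
      have : k ≤ t / K := by
        have := Finset.mem_Ico.mp hk
        omega
      exact (Nat.le_div_iff_mul_le (by omega)).mp this
    have : (k:ℝ)*(K:ℝ) - (t:ℝ) ≤ 0 := by
      have : ((k*K : ℕ) : ℝ) ≤ (t:ℝ) := by exact_mod_cast hkle
      push_cast at this
      linarith
    rw [max_eq_right this, mul_zero]
  rw [hzero, zero_add]
  have hpos : ∀ k ∈ Finset.Ico k₀ (t+1), (0:ℝ) ≤ (k:ℝ)*(K:ℝ)-(t:ℝ) := by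
    intro k hk
    have hk' := Finset.mem_Ico.mp hk
    have : t < k * K := by
      have : t / K < k := by omega
      exact (Nat.div_lt_iff_lt_mul (by omega)).mp this
    have : (t:ℝ) < ((k*K : ℕ) : ℝ) := by exact_mod_cast this
    push_cast at this
    linarith
  have hmain : ∑ k ∈ Finset.Ico k₀ (t+1),
      ((t.choose k : ℝ) * (1/(K:ℝ))^k * (((K:ℝ)-1)/(K:ℝ))^(t-k)) * max ((k:ℝ)*(K:ℝ)-(t:ℝ)) 0
      = ∑ k ∈ Finset.Ico k₀ (t+1),
        (((k:ℝ)*(K:ℝ) - (t:ℝ)) * ((t.choose k : ℝ) * (1/(K:ℝ))^k * (((K:ℝ)-1)/(K:ℝ))^(t-k))) := by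
    apply Finset.sum_congr rfl
    intro k hk
    rw [max_eq_left (hpos k hk)]
    ring
  rw [hmain, tele K t hK k₀ (t+1) (by omega) le_rfl]
  have hgtop : gfun K t (t+1) = 0 := by
    unfold gfun
    rw [Nat.choose_eq_zero_of_lt (by omega)]
    simp
  rw [hgtop, sub_zero]
  -- final evaluation
  unfold gfun
  have hexp : t + 1 - k₀ = m₀ + 1 := by omega
  rw [hexp]
  have hk₀1 : 1 ≤ k₀ := by rw [hk₀]; exact Nat.succ_le_succ (Nat.zero_le _)
  have hchoose : (t:ℝ) * ((t-1).choose m₀ : ℝ) = (k₀:ℝ) * (t.choose k₀ : ℝ) := by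
    obtain ⟨t', rfl⟩ : ∃ t', t = t' + 1 := ⟨t - 1, by omega⟩
    obtain ⟨j, rfl⟩ : ∃ j, k₀ = j + 1 := ⟨k₀ - 1, by omega⟩
    have hjt : j ≤ t' := by omega
    have h1 : m₀ = t' - j := by omega
    have h3 : (t'+1-1).choose m₀ = t'.choose j := by
      simp only [Nat.add_sub_cancel, h1]
      exact Nat.choose_symm hjt
    have h4 : (t'+1) * t'.choose j = (j+1) * ((t'+1).choose (j+1)) := by
      simpa [Nat.succ_eq_add_one, mul_comm] using Nat.add_one_mul_choose_eq t' j
    rw [h3]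
    exact_mod_cast congrArg (Nat.cast (R := ℝ)) h4
  have hKt : (K:ℝ)^t = (K:ℝ)^k₀ * (K:ℝ)^m₀ := by
    rw [← pow_add]
    congr 1
    omega
  rw [div_pow, hKt]
  rw [div_pow ((K:ℝ)-1) (K:ℝ)]
  have hK' : (K:ℝ) * (1/(K:ℝ)) = 1 := by field_simp
  linear_combination ((k₀:ℝ) * (t.choose k₀ : ℝ) * (((K:ℝ)-1)^(m₀+1) / ((K:ℝ)^k₀ * (K:ℝ)^m₀))) * hK'
    - (((K:ℝ)-1)^(m₀+1) / ((K:ℝ)^k₀ * (K:ℝ)^m₀)) * hchoose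
end

section
/- For real K > 1 and t > K/(K-1), with m₀ = t - ⌊t/K⌋ - 1, the inequality ((K-1)^{m₀+1}/K^t) · (t-1)^{t-1} / (m₀^{m₀} (t-1-m₀)^{t-1-m₀}) ≥ ((K-1)/K) · min{1 - K/t, 1 - K/(t(K-1))} holds. -/
open Real

set_option maxHeartbeats 1000000 in
/-- For real `K > 1` and `t > K/(K-1)`, with `m₀ = t - ⌊t/K⌋ - 1`,
`((K-1)^{m₀+1}/K^t) (t-1)^{t-1} / (m₀^{m₀} (t-1-m₀)^{t-1-m₀})
  ≥ ((K-1)/K) min{1 - K/t, 1 - K/(t(K-1))}` (real powers). -/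
theorem stmt_5 (K t : ℝ) (hK : 1 < K) (ht : t > K / (K - 1))
    (m₀ : ℝ) (hm₀ : m₀ = t - (⌊t / K⌋ : ℝ) - 1) :
    (K - 1) ^ (m₀ + 1) / K ^ t * (t - 1) ^ (t - 1)
        / (m₀ ^ m₀ * (t - 1 - m₀) ^ (t - 1 - m₀))
      ≥ (K - 1) / K * min (1 - K / t) (1 - K / (t * (K - 1))) := by
  have hK0 : (0:ℝ) < K := by linarith
  have hK1 : (0:ℝ) < K - 1 := by linarith
  have ht1 : 1 < t := lt_trans ((one_lt_div hK1).mpr (by linarith)) ht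
  have ht0 : (0:ℝ) < t := by linarith
  have htK' : K < t * (K - 1) := (div_lt_iff₀ hK1).mp ht
  set F : ℝ := ((⌊t / K⌋ : ℤ) : ℝ) with hFdef
  have hF0 : 0 ≤ F := by
    have : (0:ℤ) ≤ ⌊t / K⌋ := Int.floor_nonneg.mpr (le_of_lt (div_pos ht0 hK0))
    rw [hFdef]; exact_mod_cast this
  have hFle : F ≤ t / K := Int.floor_le _
  have hFgt : t / K - 1 < F := Int.sub_one_lt_floor _
  have hn : (0:ℝ) < t - 1 := by linarith
  have htK2 : t / K < t - 1 := by rw [div_lt_iff₀ hK0]; nlinarith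
  have hm : 0 < m₀ := by rw [hm₀]; have := hFle; linarith
  have hfm : t - 1 - m₀ = F := by rw [hm₀]; ring
  have hmF : m₀ + F = t - 1 := by rw [hm₀]; ring
  rw [hfm]
  have hA : 0 < (K - 1) ^ (m₀ + 1) := rpow_pos_of_pos hK1 _
  have hB : 0 < K ^ t := rpow_pos_of_pos hK0 _
  have hC : 0 < (t - 1) ^ (t - 1) := rpow_pos_of_pos hn _
  have hD : 0 < m₀ ^ m₀ := rpow_pos_of_pos hm _
  have hE : 0 < F ^ F := by
    rcases hF0.eq_or_lt with h | h
    · rw [← h, Real.rpow_zero]; exact one_pos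
    · exact rpow_pos_of_pos h _
  have hLpos : 0 < (K - 1) ^ (m₀ + 1) / K ^ t * (t - 1) ^ (t - 1) / (m₀ ^ m₀ * F ^ F) :=
    div_pos (mul_pos (div_pos hA hB) hC) (mul_pos hD hE)
  rcases le_or_gt (min (1 - K / t) (1 - K / (t * (K - 1)))) 0 with hμ | hμ
  · have hRle : (K - 1) / K * min (1 - K / t) (1 - K / (t * (K - 1))) ≤ 0 :=
      mul_nonpos_of_nonneg_of_nonpos (by positivity) hμ
    exact le_of_lt (lt_of_le_of_lt hRle hLpos)
  · -- main case
    have hr1 : 0 < 1 - K / t := lt_of_lt_of_le hμ (min_le_left _ _)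
    have hr2 : 0 < 1 - K / (t * (K - 1)) := lt_of_lt_of_le hμ (min_le_right _ _)
    have htK : K < t := by
      have : K / t < 1 := by linarith
      rwa [div_lt_one ht0] at this
    have hFpos : 0 < F := by
      have : 1 < t / K := (one_lt_div hK0).mpr htK
      linarith
    have hRpos : 0 < (K - 1) / K * min (1 - K / t) (1 - K / (t * (K - 1))) :=
      mul_pos (div_pos hK1 hK0) hμ
    rw [ge_iff_le, ← Real.log_le_log_iff hRpos hLpos]
    -- expand logs
    have hlogL : Real.log ((K - 1) ^ (m₀ + 1) / K ^ t * (t - 1) ^ (t - 1) / (m₀ ^ m₀ * F ^ F))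
        = (m₀ + 1) * Real.log (K - 1) - t * Real.log K + (t - 1) * Real.log (t - 1)
          - m₀ * Real.log m₀ - F * Real.log F := by
      rw [Real.log_div (by positivity) (by positivity),
        Real.log_mul (by positivity) (ne_of_gt hC),
        Real.log_div (ne_of_gt hA) (ne_of_gt hB),
        Real.log_mul (ne_of_gt hD) (ne_of_gt hE),
        Real.log_rpow hK1, Real.log_rpow hK0, Real.log_rpow hn, Real.log_rpow hm,
        Real.log_rpow hFpos]
      ring
    have hlogR : Real.log ((K - 1) / K * min (1 - K / t) (1 - K / (t * (K - 1))))
        = Real.log (K - 1) - Real.log K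
          + Real.log (min (1 - K / t) (1 - K / (t * (K - 1)))) := by
      rw [Real.log_mul (by positivity) (ne_of_gt hμ), Real.log_div (ne_of_gt hK1) (ne_of_gt hK0)]
    rw [hlogL, hlogR]
    -- key inequality
    set u : ℝ := m₀ * K / ((t - 1) * (K - 1)) with hu_def
    set v : ℝ := F * K / (t - 1) with hv_def
    have hu : 0 < u := div_pos (mul_pos hm hK0) (mul_pos hn hK1)
    have hv : 0 < v := div_pos (mul_pos hFpos hK0) hn
    have hlogu : Real.log u = Real.log m₀ + Real.log K - (Real.log (t - 1) + Real.log (K - 1)) := by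
      rw [hu_def, Real.log_div (by positivity) (by positivity),
        Real.log_mul (ne_of_gt hm) (ne_of_gt hK0),
        Real.log_mul (ne_of_gt hn) (ne_of_gt hK1)]
    have hlogv : Real.log v = Real.log F + Real.log K - Real.log (t - 1) := by
      rw [hv_def, Real.log_div (by positivity) (ne_of_gt hn),
        Real.log_mul (ne_of_gt hFpos) (ne_of_gt hK0)]
    have h3 : m₀ * Real.log u ≤ m₀ * (u - 1) :=
      mul_le_mul_of_nonneg_left (Real.log_le_sub_one_of_pos hu) hm.le
    have h4 : F * Real.log v ≤ F * (v - 1) :=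
      mul_le_mul_of_nonneg_left (Real.log_le_sub_one_of_pos hv) hFpos.le
    -- the quadratic identity
    set e : ℝ := t - 1 - F * K with he_def
    have hEq : m₀ * (u - 1) + F * (v - 1) = e ^ 2 / ((t - 1) * (K - 1)) := by
      rw [hu_def, hv_def, hm₀, he_def]
      field_simp
      ring
    have hFK : F * K ≤ t := by
      have h := hFle
      rwa [le_div_iff₀ hK0] at h
    have hFK' : t - K < F * K := by
      have h2 : (t / K - 1) * K < F * K := mul_lt_mul_of_pos_right hFgt hK0
      have h3 : (t / K - 1) * K = t - K := by field_simp
      linarith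
    have hdlow : -1 ≤ e := by rw [he_def]; linarith
    have hdhigh : e < K - 1 := by rw [he_def]; linarith
    have hfinal : m₀ * (u - 1) + F * (v - 1) ≤ -Real.log (min (1 - K / t) (1 - K / (t * (K - 1)))) := by
      rcases le_total K 2 with hK2 | hK2
      · -- use second component
        have hstep : m₀ * (u - 1) + F * (v - 1) ≤ K / (t * (K - 1)) := by
          rw [hEq, div_le_div_iff₀ (mul_pos hn hK1) (mul_pos ht0 hK1)]
          have hsq : e ^ 2 ≤ 1 := by nlinarith [mul_nonneg (by linarith : (0:ℝ) ≤ 1 - e) (by linarith : (0:ℝ) ≤ 1 + e)]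
          have h1 : e ^ 2 * (t * (K - 1)) ≤ 1 * (t * (K - 1)) :=
            mul_le_mul_of_nonneg_right hsq (le_of_lt (mul_pos ht0 hK1))
          nlinarith [mul_nonneg (by linarith : (0:ℝ) ≤ t * (K - 1) - K) hK1.le]
        have hlog1 : Real.log (min (1 - K / t) (1 - K / (t * (K - 1))))
            ≤ Real.log (1 - K / (t * (K - 1))) := Real.log_le_log hμ (min_le_right _ _)
        have hlog2 : Real.log (1 - K / (t * (K - 1))) ≤ (1 - K / (t * (K - 1))) - 1 :=
          Real.log_le_sub_one_of_pos hr2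
        linarith
      · -- use first component
        have hstep : m₀ * (u - 1) + F * (v - 1) ≤ K / t := by
          rw [hEq, div_le_div_iff₀ (mul_pos hn hK1) ht0]
          have hsq : e ^ 2 ≤ (K - 1) ^ 2 := by
            nlinarith [mul_nonneg (by linarith : (0:ℝ) ≤ K - 1 - e) (by linarith : (0:ℝ) ≤ K - 1 + e)]
          have h1 : e ^ 2 * t ≤ (K - 1) ^ 2 * t := mul_le_mul_of_nonneg_right hsq ht0.le
          nlinarith [mul_nonneg hK1.le (by linarith : (0:ℝ) ≤ t - K)]
        have hlog1 : Real.log (min (1 - K / t) (1 - K / (t * (K - 1))))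
            ≤ Real.log (1 - K / t) := Real.log_le_log hμ (min_le_left _ _)
        have hlog2 : Real.log (1 - K / t) ≤ (1 - K / t) - 1 :=
          Real.log_le_sub_one_of_pos hr1
        linarith
    have hcomb : m₀ * Real.log u + F * Real.log v
        = m₀ * Real.log m₀ + F * Real.log F + (t - 1) * Real.log K
          - (t - 1) * Real.log (t - 1) - m₀ * Real.log (K - 1) := by
      rw [hlogu, hlogv]
      have : F = t - 1 - m₀ := by linarith [hmF]
      rw [this]; ring
    linarith [h3, h4, hfinal, hcomb]
end

section
/- For every real b ≥ 6, with k = ⌊b/2⌋, the sum ∑_{i=1}^{k} ( ⌈ib/(1 - i/b)⌉ - 1 ) ≥ b³/16. -/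
lemma gauss_icc (k : ℕ) : ∑ i ∈ Finset.Icc 1 k, (i : ℝ) = k * (k + 1) / 2 := by
  induction k with
  | zero => simp
  | succ n ih =>
    rw [Finset.sum_Icc_succ_top (by omega), ih]
    push_cast; ring

/-- Claim 2: for real `b ≥ 6`, with `k = ⌊b/2⌋`,
`∑_{i=1}^{k} (⌈ib/(1 - i/b)⌉ - 1) ≥ b³/16`. -/
theorem stmt_16 (b : ℝ) (hb : 6 ≤ b) :
    ∑ i ∈ Finset.Icc 1 ⌊b / 2⌋₊,
        ((⌈(i : ℝ) * b / (1 - (i : ℝ) / b)⌉ : ℝ) - 1)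
      ≥ b ^ 3 / 16 := by
  set k := ⌊b / 2⌋₊ with hk
  have hb0 : (0:ℝ) < b := by linarith
  have hkle : (k : ℝ) ≤ b / 2 := Nat.floor_le (by linarith)
  have hkge : b / 2 - 1 ≤ (k : ℝ) := by
    have := Nat.lt_floor_add_one (b / 2)
    linarith
  have hstep : ∀ i ∈ Finset.Icc 1 k,
      (i : ℝ) * b ^ 2 / (b - 1) - 1 ≤ (⌈(i : ℝ) * b / (1 - (i : ℝ) / b)⌉ : ℝ) - 1 := by
    intro i hi
    simp only [Finset.mem_Icc] at hi
    have h1 : (1 : ℝ) ≤ (i : ℝ) := by exact_mod_cast hi.1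
    have h2 : (i : ℝ) ≤ b / 2 := le_trans (by exact_mod_cast hi.2) hkle
    have hbi : (0:ℝ) < b - (i : ℝ) := by linarith
    have hb1 : (0:ℝ) < b - 1 := by linarith
    have key : (i : ℝ) * b ^ 2 / (b - 1) ≤ (i : ℝ) * b / (1 - (i : ℝ) / b) := by
      have h3 : (0:ℝ) < 1 - (i : ℝ) / b := by
        rw [sub_pos, div_lt_one hb0]; linarith
      have heq : (i : ℝ) * b / (1 - (i : ℝ) / b) = (i : ℝ) * b ^ 2 / (b - (i : ℝ)) := by
        rw [div_eq_div_iff h3.ne' hbi.ne']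
        field_simp
      rw [heq]
      exact div_le_div_of_nonneg_left (by positivity) hbi (by linarith)
    have := Int.le_ceil ((i : ℝ) * b / (1 - (i : ℝ) / b))
    linarith
  have hsum := Finset.sum_le_sum hstep
  have hcomp : ∑ i ∈ Finset.Icc 1 k, ((i : ℝ) * b ^ 2 / (b - 1) - 1)
      = (k : ℝ) * (k + 1) / 2 * (b ^ 2 / (b - 1)) - k := by
    rw [Finset.sum_sub_distrib]
    have e1 : ∀ i ∈ Finset.Icc 1 k, (i:ℝ) * b ^ 2 / (b - 1) = (i:ℝ) * (b ^ 2 / (b - 1)) :=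
      fun i _ => by ring
    rw [Finset.sum_congr rfl e1, ← Finset.sum_mul, gauss_icc]
    simp [Nat.card_Icc]
  have hb1 : (0:ℝ) < b - 1 := by linarith
  have key : b ^ 3 / 16 * (b - 1) ≤ (k : ℝ) * ((k : ℝ) + 1) / 2 * b ^ 2 - (k : ℝ) * (b - 1) := by
    nlinarith [mul_nonneg (sub_nonneg.2 hkge) (sub_nonneg.2 hkge), sq_nonneg (b - 6),
      mul_nonneg (sub_nonneg.2 hkge) (by linarith : (0:ℝ) ≤ b), sq_nonneg ((k:ℝ) - b/2 + 1)]
  have hfin : b ^ 3 / 16 ≤ (k : ℝ) * ((k : ℝ) + 1) / 2 * (b ^ 2 / (b - 1)) - k := by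
    rw [← sub_nonneg]
    have : (k : ℝ) * ((k : ℝ) + 1) / 2 * (b ^ 2 / (b - 1)) - k - b ^ 3 / 16
        = ((k : ℝ) * ((k : ℝ) + 1) / 2 * b ^ 2 - (k : ℝ) * (b - 1) - b ^ 3 / 16 * (b - 1)) / (b - 1) := by
      field_simp
    rw [this]
    exact div_nonneg (by linarith) hb1.le
  rw [hcomp] at hsum
  linarith
end
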